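/- Let C be an m×(n+d) real matrix, Σ an (n+d)×(n+d) real symmetric positive semidefinite matrix, and X an (n+d)×d matrix with rank X = d. The system of constraints Δ(I − P_Σ) = 0 and (C − Δ)X = 0 in an m×(n+d) matrix Δ is solvable if and only if col(XᵀCᵀ) ⊆ col(XᵀΣ). -/

import Mathlib

open Matrix

/-- P is the Moore–Penrose pseudoinverse of M (the four Penrose conditions). -/
def IsMoorePenrose {a b : ℕ} (M : Matrix (Fin a) (Fin b) ℝ) (P : Matrix (Fin b) (Fin a) ℝ) :
    Prop :=
  M * P * M = M ∧ P * M * P = P ∧ (M * P)ᵀ = M * P ∧ (P * M)ᵀ = P * M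

/-- Column space of a matrix. -/
def colSpace {a b : ℕ} (M : Matrix (Fin a) (Fin b) ℝ) : Submodule ℝ (Fin a → ℝ) :=
  LinearMap.range M.mulVecLin

/-- Column space inclusion gives a factorization. -/
lemma exists_factor {a b c : ℕ} (A : Matrix (Fin a) (Fin c) ℝ) (B : Matrix (Fin a) (Fin b) ℝ)
    (h : LinearMap.range A.mulVecLin ≤ LinearMap.range B.mulVecLin) :
    ∃ Y : Matrix (Fin b) (Fin c) ℝ, B * Y = A := by
  have hcol : ∀ j : Fin c, ∃ y : Fin b → ℝ, B.mulVec y = fun i => A i j := by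
    intro j
    have : (fun i => A i j) ∈ LinearMap.range A.mulVecLin := by
      refine ⟨Pi.single j 1, ?_⟩
      ext i
      simp [mulVecLin, mulVec, dotProduct, Pi.single_apply]
    exact h this
  choose y hy using hcol
  refine ⟨Matrix.of (fun i j => y j i), ?_⟩
  ext i j
  have := congrFun (hy j) i
  simpa [mul_apply, mulVec, dotProduct] using this

/-- The constraints Δ(I − P_Σ) = 0, (C − Δ)X = 0 (with P_Σ = ΣΣ⁺) are solvable in Δ
iff col(XᵀCᵀ) ⊆ col(XᵀΣ). -/
theorem tls_constraints_solvable_iff {m n d : ℕ}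
    (C : Matrix (Fin m) (Fin (n + d)) ℝ)
    (Sg : Matrix (Fin (n + d)) (Fin (n + d)) ℝ) (hSg : Sg.PosSemidef)
    (Sp : Matrix (Fin (n + d)) (Fin (n + d)) ℝ) (hSp : IsMoorePenrose Sg Sp)
    (X : Matrix (Fin (n + d)) (Fin d) ℝ) (hX : X.rank = d) :
    (∃ Δ : Matrix (Fin m) (Fin (n + d)) ℝ,
        Δ * (1 - Sg * Sp) = 0 ∧ (C - Δ) * X = 0) ↔
      colSpace (Xᵀ * Cᵀ) ≤ colSpace (Xᵀ * Sg) := by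
  obtain ⟨h1, h2, h3, h4⟩ := hSp
  have hSym : Sgᵀ = Sg := hSg.1
  -- Σ Σ Σ⁺ = Σ
  have key : Sg * (Sg * Sp) = Sg := by
    have := congrArg Matrix.transpose h1
    calc Sg * (Sg * Sp) = ((Sg * Sp)ᵀ * Sgᵀ)ᵀ := by rw [← transpose_mul, transpose_transpose]
    _ = (Sg * Sp * Sg)ᵀ := by rw [h3, hSym]
    _ = Sg := by rw [h1, hSym]
  constructor
  · rintro ⟨Δ, hΔ1, hΔ2⟩
    have hΔ : Δ = Δ * (Sg * Sp) := by
      have := sub_eq_zero.mp (by simpa [Matrix.mul_sub] using hΔ1)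
      simpa using this
    have hCX : C * X = Δ * X := by
      have := sub_eq_zero.mp (by simpa [Matrix.sub_mul] using hΔ2)
      simpa using this
    have hfac : Xᵀ * Cᵀ = (Xᵀ * Sg) * (Sp * Δᵀ) := by
      calc Xᵀ * Cᵀ = (C * X)ᵀ := by rw [transpose_mul]
      _ = (Δ * X)ᵀ := by rw [hCX]
      _ = Xᵀ * Δᵀ := by rw [transpose_mul]
      _ = Xᵀ * (Δ * (Sg * Sp))ᵀ := by rw [← hΔ]
      _ = Xᵀ * ((Sg * Sp) * Δᵀ) := by rw [transpose_mul, h3]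
      _ = (Xᵀ * Sg) * (Sp * Δᵀ) := by simp [Matrix.mul_assoc]
    rintro v ⟨x, rfl⟩
    exact ⟨(Sp * Δᵀ).mulVec x, by
      simp [hfac, mulVecLin, ← Matrix.mulVec_mulVec, Matrix.mulVec_transpose]⟩
  · intro h
    obtain ⟨Y, hY⟩ := exists_factor (Xᵀ * Cᵀ) (Xᵀ * Sg) h
    refine ⟨Yᵀ * Sg, ?_, ?_⟩
    · have : Yᵀ * Sg * (Sg * Sp) = Yᵀ * Sg := by rw [Matrix.mul_assoc, key]
      rw [Matrix.mul_sub, Matrix.mul_one, this, sub_self]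
    · have : Xᵀ * (C - Yᵀ * Sg)ᵀ = 0 := by
        rw [transpose_sub, Matrix.mul_sub, transpose_mul, transpose_transpose, hSym,
          ← Matrix.mul_assoc, ← hY, sub_self]
      have := congrArg Matrix.transpose this
      simpa [transpose_mul] using this
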